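/- Suppose P0, P1 : ℕ → ℝ satisfy the steady-state CME of the generalized ON-OFF model with rate functions K1, K2, K3 : ℕ → ℝ, and set P(n) = P0(n) + P1(n). Then for every n ≥ 1, P0(n) = (1/n!)·P0(0)·∏_{i=0}^{n−1}(i + K1(i) + K2(i)) − Σ_{i=0}^{n−2} [K2(i)/(i+1)]·P(i)·∏_{j=i+1}^{n−1} (j + K1(j) + K2(j))/(j+1) − [K2(n−1)/n]·P(n−1). -/
import Mathlib


open Finset

/-- Formula (7) of the paper: for solutions of the steady-state CME of the
generalized ON-OFF model, for every `n ≥ 1`,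
`P0(n) = (1/n!)·P0(0)·∏_{i=0}^{n−1}(i + K1(i) + K2(i))
  − Σ_{i=0}^{n−2} [K2(i)/(i+1)]·P(i)·∏_{j=i+1}^{n−1}(j + K1(j) + K2(j))/(j+1)
  − [K2(n−1)/n]·P(n−1)`. -/
theorem cme_P0_formula (K1 K2 K3 P0 P1 P : ℕ → ℝ)
    (hCME0 : ∀ n : ℕ,
      -K1 n * P0 n + K2 n * P1 n + ((n : ℝ) + 1) * P0 (n + 1) - (n : ℝ) * P0 n = 0)
    (hCME1 : ∀ n : ℕ,
      K1 n * P0 n - K2 n * P1 n + (if n = 0 then 0 else K3 (n - 1) * P1 (n - 1))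
        - K3 n * P1 n + ((n : ℝ) + 1) * P1 (n + 1) - (n : ℝ) * P1 n = 0)
    (hP : ∀ n : ℕ, P n = P0 n + P1 n) :
    ∀ n : ℕ, 1 ≤ n →
      P0 n = (1 / (n.factorial : ℝ)) * P0 0 * ∏ i ∈ Finset.range n, ((i : ℝ) + K1 i + K2 i)
        - ∑ i ∈ Finset.range (n - 1), (K2 i / ((i : ℝ) + 1)) * P i *
            ∏ j ∈ Finset.Icc (i + 1) (n - 1), (((j : ℝ) + K1 j + K2 j) / ((j : ℝ) + 1))
        - (K2 (n - 1) / (n : ℝ)) * P (n - 1) := by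
  have hrec : ∀ n : ℕ, ((n : ℝ) + 1) * P0 (n + 1)
      = ((n : ℝ) + K1 n + K2 n) * P0 n - K2 n * P n := by
    intro n
    linear_combination hCME0 n + K2 n * hP n
  have main : ∀ m : ℕ,
      P0 (m + 1) = (1 / ((m+1).factorial : ℝ)) * P0 0 *
          ∏ i ∈ Finset.range (m+1), ((i : ℝ) + K1 i + K2 i)
        - ∑ i ∈ Finset.range m, (K2 i / ((i : ℝ) + 1)) * P i *
            ∏ j ∈ Finset.Icc (i + 1) m, (((j : ℝ) + K1 j + K2 j) / ((j : ℝ) + 1))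
        - (K2 m / ((m : ℝ) + 1)) * P m := by
    intro m
    induction m with
    | zero =>
      simp [Nat.factorial]
      linear_combination hrec 0
    | succ m ih =>
      have hfac : (((m+2).factorial : ℝ)) = ((m : ℝ) + 2) * ((m+1).factorial : ℝ) := by
        push_cast [Nat.factorial_succ]
        ring
      have hfacne : ((m+1).factorial : ℝ) ≠ 0 := by positivity
      have hm2 : ((m : ℝ) + 2) ≠ 0 := by positivity
      have hsum : ∑ i ∈ Finset.range (m+1), (K2 i / ((i : ℝ) + 1)) * P i *
            ∏ j ∈ Finset.Icc (i + 1) (m+1), (((j : ℝ) + K1 j + K2 j) / ((j : ℝ) + 1))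
          = (∑ i ∈ Finset.range m, (K2 i / ((i : ℝ) + 1)) * P i *
            ∏ j ∈ Finset.Icc (i + 1) m, (((j : ℝ) + K1 j + K2 j) / ((j : ℝ) + 1)))
              * ((((m:ℝ)+1) + K1 (m+1) + K2 (m+1)) / (((m:ℝ)+1) + 1))
            + (K2 m / ((m : ℝ) + 1)) * P m
              * ((((m:ℝ)+1) + K1 (m+1) + K2 (m+1)) / (((m:ℝ)+1) + 1)) := by
        rw [Finset.sum_range_succ, Finset.sum_mul]
        congr 1
        · apply Finset.sum_congr rfl
          intro i hi
          simp only [Finset.mem_range] at hi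
          rw [Finset.prod_Icc_succ_top (by omega : i + 1 ≤ m + 1)]
          push_cast
          ring
        · rw [Finset.Icc_self, Finset.prod_singleton]
          push_cast
          ring
      rw [show m + 1 + 1 = m + 2 from rfl] at *
      have h2 := hrec (m+1)
      have h3 : P0 (m+2) = ((((m:ℝ)+1) + K1 (m+1) + K2 (m+1)) * P0 (m+1)
          - K2 (m+1) * P (m+1)) / ((m:ℝ)+2) := by
        rw [eq_div_iff hm2]
        push_cast at h2
        linarith [h2]
      rw [hsum, Finset.prod_range_succ, hfac, h3, ih]
      push_cast
      field_simp
      ring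
  intro n hn
  obtain ⟨m, rfl⟩ : ∃ m, n = m + 1 := ⟨n - 1, (Nat.succ_pred_eq_of_pos hn).symm⟩
  simpa using main m
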